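/- Let (T, Σ, μ) be a probability measure space and let (g_n) be a sequence of measurable real-valued functions on T that is stochastically independent with respect to μ, uniformly bounded (there is M such that |g_n(t)| ≤ M for all n and t), and satisfies ∫_T g_n dμ = 0 for every n. Then for every bounded measurable function f : T → ℝ, the integrals ∫_T f·g_n dμ converge to 0 as n → ∞. -/

import Mathlib

open Topology Filter MeasureTheory ProbabilityTheory
open scoped RealInnerProductSpace

theorem stmt_14 {T : Type*} [MeasurableSpace T] (μ : Measure T) [IsProbabilityMeasure μ]
    (g : ℕ → T → ℝ) (hgmeas : ∀ n, Measurable (g n))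
    (hindep : iIndepFun (m := fun _ : ℕ => (inferInstance : MeasurableSpace ℝ)) g μ)
    (M : ℝ) (hbdd : ∀ n t, |g n t| ≤ M)
    (hmean : ∀ n, ∫ t, g n t ∂μ = 0)
    (f : T → ℝ) (hfmeas : Measurable f) (C : ℝ) (hfbdd : ∀ t, |f t| ≤ C) :
    Tendsto (fun n => ∫ t, f t * g n t ∂μ) atTop (𝓝 0) := by
  have hg2 : ∀ n, MemLp (g n) 2 μ := fun n =>
    MemLp.of_bound (hgmeas n).aestronglyMeasurable M
      (Eventually.of_forall fun t => by simpa using hbdd n t)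
  have hf2 : MemLp f 2 μ :=
    MemLp.of_bound hfmeas.aestronglyMeasurable C
      (Eventually.of_forall fun t => by simpa using hfbdd t)
  set G : ℕ → Lp ℝ 2 μ := fun n => (hg2 n).toLp (g n) with hGdef
  set F : Lp ℝ 2 μ := hf2.toLp f with hFdef
  set c : ℕ → ℝ := fun n => ∫ t, f t * g n t ∂μ with hc
  have hcinner : ∀ n, c n = ⟪F, G n⟫ := by
    intro n
    rw [L2.inner_def]
    refine (integral_congr_ae ?_).symm
    filter_upwards [hf2.coeFn_toLp, (hg2 n).coeFn_toLp] with t h1 h2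
    simp [hGdef, hFdef, h1, h2, RCLike.inner_apply, mul_comm]
  have horth : ∀ n m, n ≠ m → ⟪G n, G m⟫ = 0 := by
    intro n m hnm
    rw [L2.inner_def]
    have : ∫ t, (inner ℝ (G n t) (G m t) : ℝ) ∂μ = ∫ t, g n t * g m t ∂μ := by
      refine integral_congr_ae ?_
      filter_upwards [(hg2 n).coeFn_toLp, (hg2 m).coeFn_toLp] with t h1 h2
      simp [hGdef, h1, h2, RCLike.inner_apply]
      ring
    rw [this]
    have := IndepFun.integral_mul_eq_mul_integral (hindep.indepFun hnm) (hgmeas n).aestronglyMeasurable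
      (hgmeas m).aestronglyMeasurable
    simpa [Pi.mul_apply, hmean n, hmean m] using this
  have hMsq : ∀ n, ⟪G n, G n⟫ ≤ M ^ 2 := by
    intro n
    rw [L2.inner_def]
    have h1 : ∫ t, (inner ℝ (G n t) (G n t) : ℝ) ∂μ = ∫ t, g n t * g n t ∂μ := by
      refine integral_congr_ae ?_
      filter_upwards [(hg2 n).coeFn_toLp] with t h1
      simp [hGdef, h1, RCLike.inner_apply]
      ring
    rw [h1]
    have hInt : Integrable (fun t => g n t * g n t) μ :=
      (MemLp.of_bound ((hgmeas n).mul (hgmeas n)).aestronglyMeasurable (M ^ 2)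
        (Eventually.of_forall fun t => by
          have h := hbdd n t
          have : |g n t * g n t| ≤ M ^ 2 := by
            rw [abs_mul]
            nlinarith [abs_nonneg (g n t)]
          simpa using this)).integrable le_rfl
    calc ∫ t, g n t * g n t ∂μ ≤ ∫ _t, M ^ 2 ∂μ := by
          refine integral_mono hInt (integrable_const _) fun t => ?_
          have h := hbdd n t
          nlinarith [abs_nonneg (g n t), le_abs_self (g n t), neg_abs_le (g n t)]
      _ = M ^ 2 := by simp
  set K : ℝ := M ^ 2 + 1 with hKdef
  have hK0 : 0 < K := by positivity
  have hGK : ∀ n, ⟪G n, G n⟫ ≤ K := fun n => (hMsq n).trans (by linarith)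
  -- Bessel-type bound
  have hbessel : ∀ s : Finset ℕ, ∑ n ∈ s, (c n) ^ 2 ≤ K * ⟪F, F⟫ := by
    intro s
    set v : Lp ℝ 2 μ := ∑ n ∈ s, (c n / K) • G n with hv
    have h0 : (0 : ℝ) ≤ ⟪F - v, F - v⟫ := real_inner_self_nonneg
    have hFv : ⟪F, v⟫ = (∑ n ∈ s, (c n) ^ 2) / K := by
      rw [hv, inner_sum]
      rw [Finset.sum_div]
      refine Finset.sum_congr rfl fun n _ => ?_
      rw [real_inner_smul_right, ← hcinner n]
      ring
    have hvv : ⟪v, v⟫ ≤ (∑ n ∈ s, (c n) ^ 2) / K := by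
      have : ⟪v, v⟫ = ∑ n ∈ s, (c n / K) ^ 2 * ⟪G n, G n⟫ := by
        rw [hv, sum_inner]
        refine Finset.sum_congr rfl fun n hn => ?_
        rw [inner_sum, Finset.sum_eq_single n]
        · rw [real_inner_smul_left, real_inner_smul_right]; ring
        · intro m hm hmn
          rw [real_inner_smul_left, real_inner_smul_right, horth n m (Ne.symm hmn)]
          ring
        · intro hns; exact absurd hn hns
      rw [this, Finset.sum_div]
      refine Finset.sum_le_sum fun n _ => ?_
      have h1 : (c n / K) ^ 2 * ⟪G n, G n⟫ ≤ (c n / K) ^ 2 * K :=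
        mul_le_mul_of_nonneg_left (hGK n) (sq_nonneg _)
      refine h1.trans_eq ?_
      field_simp
    have hexp : ⟪F - v, F - v⟫ = ⟪F, F⟫ - 2 * ⟪F, v⟫ + ⟪v, v⟫ := by
      rw [inner_sub_sub_self, real_inner_comm v F]; ring
    rw [hexp, hFv] at h0
    have : (∑ n ∈ s, (c n) ^ 2) / K ≤ ⟪F, F⟫ := by linarith
    calc ∑ n ∈ s, (c n) ^ 2 = K * ((∑ n ∈ s, (c n) ^ 2) / K) := by field_simp
      _ ≤ K * ⟪F, F⟫ := mul_le_mul_of_nonneg_left this hK0.le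
  have hsum : Summable fun n => (c n) ^ 2 :=
    summable_of_sum_le (fun n => sq_nonneg _) hbessel
  have hsq : Tendsto (fun n => (c n) ^ 2) atTop (𝓝 0) := hsum.tendsto_atTop_zero
  have habs : Tendsto (fun n => |c n|) atTop (𝓝 0) := by
    have := (Real.continuous_sqrt.tendsto 0).comp hsq
    simpa [Function.comp_def, Real.sqrt_sq_eq_abs] using this
  exact (tendsto_zero_iff_abs_tendsto_zero c).mpr habs
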